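/- arXiv:1806.05044 — 3 statements merged into one kernel-verified Lean document; each statement's English description precedes it below -/
import Mathlib

section
/- Let A = K[[f_1,…,f_s]] ⊆ F = K[[x_1,…,x_n]] with the length of F/A as an A-module finite, and let a, b ∈ (ℝ_{>0})^n with M(A,a) = M(A,b). If {g_1,…,g_r} is an a-reduced canonical basis of A, then M(g_i,a) = M(g_i,b) for all i ∈ {1,…,r}, and {g_1,…,g_r} is also a b-reduced canonical basis of A. -/
noncomputable section

namespace CanonicalFan

open MvPowerSeries

variable (K : Type*) [Field K] (n : ℕ)

/-- The weight `⟨a, α⟩ = ∑ i, a i * α i` of an exponent `α` with respect to `a`. -/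
def weight (a : Fin n → ℝ) (α : Fin n →₀ ℕ) : ℝ := ∑ i, a i * (α i : ℝ)

/-- The support of a formal power series. -/
def supp (f : MvPowerSeries (Fin n) K) : Set (Fin n →₀ ℕ) :=
  {α | MvPowerSeries.coeff α f ≠ 0}

/-- The `a`-valuation `ν(f,a)`, with the convention `ν(0,a) = +∞`. -/
def nu (a : Fin n → ℝ) (f : MvPowerSeries (Fin n) K) : EReal :=
  sInf ((fun α => ((weight n a α : ℝ) : EReal)) '' supp K n f)

open Classical in
/-- The `a`-initial form `in(f,a)` of a power series. -/
def initialForm (a : Fin n → ℝ) (f : MvPowerSeries (Fin n) K) :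
    MvPowerSeries (Fin n) K :=
  fun α => if ((weight n a α : ℝ) : EReal) = nu K n a f then MvPowerSeries.coeff α f else 0

open Classical in
/-- `exp(f,a)`: the `≺`-maximal element of the support of `in(f,a)`, where `≺` is the
well-ordering `r` (junk value `0` if no maximal element exists). -/
def exponent (r : (Fin n →₀ ℕ) → (Fin n →₀ ℕ) → Prop) (a : Fin n → ℝ)
    (f : MvPowerSeries (Fin n) K) : Fin n →₀ ℕ :=
  if h : ∃ β ∈ supp K n (initialForm K n a f),
      ∀ γ ∈ supp K n (initialForm K n a f), γ = β ∨ r γ β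
  then h.choose else 0

/-- The `a`-leading monomial `M(f,a) = c_{exp(f,a)} x^{exp(f,a)}`. -/
def leadMon (r : (Fin n →₀ ℕ) → (Fin n →₀ ℕ) → Prop) (a : Fin n → ℝ)
    (f : MvPowerSeries (Fin n) K) : MvPowerSeries (Fin n) K :=
  MvPowerSeries.monomial (exponent K n r a f)
    (MvPowerSeries.coeff (exponent K n r a f) f)

/-- The maximal ideal `(x_1, …, x_n)` of `K[[x_1,…,x_n]]`. -/
def mIdeal : Ideal (MvPowerSeries (Fin n) K) :=
  Ideal.span (Set.range (MvPowerSeries.X : Fin n → MvPowerSeries (Fin n) K))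

/-- `K[[S]]`: the smallest `K`-subalgebra of `K[[x_1,…,x_n]]` containing `S` and closed in
the `(x_1,…,x_n)`-adic topology; concretely, the adic closure of `Algebra.adjoin K S`. -/
def closedAdjoin (S : Set (MvPowerSeries (Fin n) K)) :
    Subalgebra K (MvPowerSeries (Fin n) K) where
  carrier := {f | ∀ N : ℕ, ∃ g ∈ Algebra.adjoin K S, f - g ∈ (mIdeal K n) ^ N}
  algebraMap_mem' c N :=
    ⟨algebraMap K _ c, Subalgebra.algebraMap_mem _ c, by simp [Ideal.zero_mem]⟩
  add_mem' {f g} hf hg N := by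
    obtain ⟨p, hp, hfp⟩ := hf N
    obtain ⟨q, hq, hgq⟩ := hg N
    exact ⟨p + q, add_mem hp hq, by simpa [add_sub_add_comm] using Ideal.add_mem _ hfp hgq⟩
  mul_mem' {f g} hf hg N := by
    obtain ⟨p, hp, hfp⟩ := hf N
    obtain ⟨q, hq, hgq⟩ := hg N
    refine ⟨p * q, mul_mem hp hq, ?_⟩
    have h : f * g - p * q = f * (g - q) + (f - p) * q := by ring
    rw [h]
    exact Ideal.add_mem _ (Ideal.mul_mem_left _ _ hgq) (Ideal.mul_mem_right _ _ hfp)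

/-- `exp(A,a) = {exp(f,a) : f ∈ A, f ≠ 0}`. -/
def expSet (r : (Fin n →₀ ℕ) → (Fin n →₀ ℕ) → Prop) (a : Fin n → ℝ)
    (A : Set (MvPowerSeries (Fin n) K)) : Set (Fin n →₀ ℕ) :=
  {β | ∃ f ∈ A, f ≠ 0 ∧ exponent K n r a f = β}

/-- `in(A,a) = K[[in(f,a) : f ∈ A ∖ {0}]]`. -/
def inAlgebra (a : Fin n → ℝ) (A : Set (MvPowerSeries (Fin n) K)) :
    Subalgebra K (MvPowerSeries (Fin n) K) :=
  closedAdjoin K n {g | ∃ f ∈ A, f ≠ 0 ∧ initialForm K n a f = g}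

/-- `M(A,a) = K[[M(f,a) : f ∈ A ∖ {0}]]`. -/
def leadAlgebra (r : (Fin n →₀ ℕ) → (Fin n →₀ ℕ) → Prop) (a : Fin n → ℝ)
    (A : Set (MvPowerSeries (Fin n) K)) : Subalgebra K (MvPowerSeries (Fin n) K) :=
  closedAdjoin K n {g | ∃ f ∈ A, f ≠ 0 ∧ leadMon K n r a f = g}

set_option synthInstance.maxHeartbeats 1000000 in
/-- The length of `F/A` as an `A`-module is finite. -/
def FiniteColength (A : Subalgebra K (MvPowerSeries (Fin n) K)) : Prop :=
  IsFiniteLength A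
    (MvPowerSeries (Fin n) K ⧸ LinearMap.range (Algebra.linearMap A (MvPowerSeries (Fin n) K)))

/-- `{g_1,…,g_r}` is an `a`-canonical basis of `A`. -/
def IsCanonicalBasis (r : (Fin n →₀ ℕ) → (Fin n →₀ ℕ) → Prop) (a : Fin n → ℝ)
    (A : Subalgebra K (MvPowerSeries (Fin n) K)) {m : ℕ}
    (g : Fin m → MvPowerSeries (Fin n) K) : Prop :=
  (∀ i, g i ∈ A ∧ g i ≠ 0) ∧
    leadAlgebra K n r a (A : Set (MvPowerSeries (Fin n) K)) =
      closedAdjoin K n (Set.range fun i => leadMon K n r a (g i))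

/-- `{g_1,…,g_r}` is a minimal `a`-canonical basis of `A`. -/
def IsMinimalCanonicalBasis (r : (Fin n →₀ ℕ) → (Fin n →₀ ℕ) → Prop) (a : Fin n → ℝ)
    (A : Subalgebra K (MvPowerSeries (Fin n) K)) {m : ℕ}
    (g : Fin m → MvPowerSeries (Fin n) K) : Prop :=
  IsCanonicalBasis K n r a A g ∧
    ∀ T : Set (MvPowerSeries (Fin n) K),
      T ⊂ Set.range (fun i => leadMon K n r a (g i)) →
        closedAdjoin K n T ≠ leadAlgebra K n r a (A : Set (MvPowerSeries (Fin n) K))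

/-- `{g_1,…,g_r}` is the `a`-reduced canonical basis of `A`. -/
def IsReducedCanonicalBasis (r : (Fin n →₀ ℕ) → (Fin n →₀ ℕ) → Prop) (a : Fin n → ℝ)
    (A : Subalgebra K (MvPowerSeries (Fin n) K)) {m : ℕ}
    (g : Fin m → MvPowerSeries (Fin n) K) : Prop :=
  IsMinimalCanonicalBasis K n r a A g ∧
    (∀ i, MvPowerSeries.coeff (exponent K n r a (g i)) (g i) = 1) ∧
    ∀ i, ∀ α ∈ supp K n (g i - leadMon K n r a (g i)),
      (MvPowerSeries.monomial α (1 : K)) ∉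
        closedAdjoin K n (Set.range fun j => leadMon K n r a (g j))

/-- A power series is a (nonzero) monomial. -/
def IsMonomial (g : MvPowerSeries (Fin n) K) : Prop :=
  ∃ (α : Fin n →₀ ℕ) (c : K), c ≠ 0 ∧ g = MvPowerSeries.monomial α c

/-! ### Auxiliary lemmas -/

/-- Any nonempty finite set has a maximum with respect to a trichotomous transitive
relation. -/
lemma exists_rel_max {γ : Type*} {r : γ → γ → Prop}
    (htri : ∀ a b : γ, r a b ∨ a = b ∨ r b a)
    (htr : ∀ {a b c : γ}, r a b → r b c → r a c)
    (s : Finset γ) (hs : s.Nonempty) :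
    ∃ β ∈ s, ∀ x ∈ s, x = β ∨ r x β := by
  classical
  induction s using Finset.cons_induction with
  | empty => simp at hs
  | cons a s ha ih =>
    rcases s.eq_empty_or_nonempty with h | h
    · subst h
      exact ⟨a, by simp, by simp⟩
    · obtain ⟨β, hβs, hβ⟩ := ih h
      rcases htri a β with hab | hab | hab
      · refine ⟨β, Finset.mem_cons_of_mem hβs, ?_⟩
        intro x hx
        rcases Finset.mem_cons.1 hx with rfl | hx
        · exact Or.inr hab
        · exact hβ x hx
      · refine ⟨β, Finset.mem_cons_of_mem hβs, ?_⟩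
        intro x hx
        rcases Finset.mem_cons.1 hx with rfl | hx
        · exact Or.inl hab
        · exact hβ x hx
      · refine ⟨a, Finset.mem_cons_self a s, ?_⟩
        intro x hx
        rcases Finset.mem_cons.1 hx with rfl | hx
        · exact Or.inl rfl
        · rcases hβ x hx with rfl | hxβ
          · exact Or.inr hab
          · exact Or.inr (htr hxβ hab)

/-- The set of exponents of bounded weight is finite (when all weights are positive). -/
lemma finite_weight_le (b : Fin n → ℝ) (hb : ∀ i, 0 < b i) (c : ℝ) :
    {α : Fin n →₀ ℕ | weight n b α ≤ c}.Finite := by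
  have hfin : {u : Fin n → ℕ | ∀ i, u i ∈ {m : ℕ | m ≤ ⌊c / b i⌋₊}}.Finite :=
    Set.Finite.pi' fun i => Set.finite_le_nat _
  have hfin2 : {α : Fin n →₀ ℕ | ∀ i, α i ≤ ⌊c / b i⌋₊}.Finite :=
    hfin.preimage (f := fun (α : Fin n →₀ ℕ) => (α : Fin n → ℕ))
      DFunLike.coe_injective.injOn
  refine hfin2.subset ?_
  intro α hα i
  have hterm : b i * (α i : ℝ) ≤ weight n b α := by
    refine Finset.single_le_sum (f := fun j => b j * ((α j : ℕ) : ℝ)) ?_ (Finset.mem_univ i)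
    intro j _
    exact mul_nonneg (hb j).le (Nat.cast_nonneg _)
  have h1 : (α i : ℝ) ≤ c / b i := by
    rw [le_div_iff₀ (hb i), mul_comm]
    exact hterm.trans hα
  exact Nat.le_floor h1

/-- The support of a nonzero power series is nonempty. -/
lemma supp_nonempty_of_ne_zero (f : MvPowerSeries (Fin n) K) (hf : f ≠ 0) :
    (supp K n f).Nonempty := by
  by_contra h
  rw [Set.not_nonempty_iff_eq_empty] at h
  apply hf
  ext α
  rw [map_zero]
  have hα : α ∉ supp K n f := by rw [h]; exact Set.notMem_empty α
  simpa [supp, Set.mem_setOf_eq] using hα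

/-- The infimum defining `ν(f,b)` is attained on the support, and is a minimum. -/
lemma nu_attained (b : Fin n → ℝ) (hb : ∀ i, 0 < b i)
    (f : MvPowerSeries (Fin n) K) (hf : f ≠ 0) :
    ∃ α ∈ supp K n f, ((weight n b α : ℝ) : EReal) = nu K n b f ∧
      ∀ γ ∈ supp K n f, weight n b α ≤ weight n b γ := by
  obtain ⟨α₀, hα₀⟩ := supp_nonempty_of_ne_zero K n f hf
  set T := {α ∈ supp K n f | weight n b α ≤ weight n b α₀} with hT
  have hTfin : T.Finite := (finite_weight_le n b hb (weight n b α₀)).subset fun α hα => hα.2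
  have hTne : T.Nonempty := ⟨α₀, hα₀, le_refl _⟩
  obtain ⟨α, hαT, hmin⟩ := Set.exists_min_image T (weight n b) hTfin hTne
  have hglobal : ∀ γ ∈ supp K n f, weight n b α ≤ weight n b γ := by
    intro γ hγ
    by_cases h : weight n b γ ≤ weight n b α₀
    · exact hmin γ ⟨hγ, h⟩
    · exact (hmin α₀ ⟨hα₀, le_refl _⟩).trans (le_of_not_ge h)
  refine ⟨α, hαT.1, ?_, hglobal⟩
  apply le_antisymm
  · exact le_sInf (by rintro y ⟨γ, hγ, rfl⟩; exact EReal.coe_le_coe_iff.2 (hglobal γ hγ))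
  · exact sInf_le ⟨α, hαT.1, rfl⟩

/-- Description of the support of the initial form. -/
lemma supp_initialForm (b : Fin n → ℝ) (f : MvPowerSeries (Fin n) K) :
    supp K n (initialForm K n b f) =
      {α ∈ supp K n f | ((weight n b α : ℝ) : EReal) = nu K n b f} := by
  ext α
  have : MvPowerSeries.coeff α (initialForm K n b f) =
      (if ((weight n b α : ℝ) : EReal) = nu K n b f then MvPowerSeries.coeff α f else 0) := by
    rw [MvPowerSeries.coeff_apply]
    rfl
  simp only [supp, Set.mem_setOf_eq, this]
  split <;> simp_all

/-- The `b`-exponent of a nonzero series satisfies its defining property. -/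
lemma exponent_spec (r : (Fin n →₀ ℕ) → (Fin n →₀ ℕ) → Prop) (hr : IsWellOrder (Fin n →₀ ℕ) r)
    (b : Fin n → ℝ) (hb : ∀ i, 0 < b i)
    (f : MvPowerSeries (Fin n) K) (hf : f ≠ 0) :
    exponent K n r b f ∈ supp K n (initialForm K n b f) := by
  obtain ⟨α, hα, hnu, hmin⟩ := nu_attained K n b hb f hf
  have hSne : α ∈ supp K n (initialForm K n b f) := by
    rw [supp_initialForm]; exact ⟨hα, hnu⟩
  have hSfin : (supp K n (initialForm K n b f)).Finite := by
    rw [supp_initialForm]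
    refine (finite_weight_le n b hb (weight n b α)).subset ?_
    rintro γ ⟨hγ, hγnu⟩
    have : ((weight n b γ : ℝ) : EReal) = ((weight n b α : ℝ) : EReal) := by rw [hγnu, hnu]
    exact le_of_eq (EReal.coe_eq_coe_iff.1 this)
  have htri : ∀ x y : Fin n →₀ ℕ, r x y ∨ x = y ∨ r y x := fun x y =>
    (haveI := hr; trichotomous_of r x y)
  have htr : ∀ {x y z : Fin n →₀ ℕ}, r x y → r y z → r x z := fun hxy hyz =>
    @Trans.trans _ _ _ r r r ⟨fun h1 h2 => (haveI := hr; (inferInstance : IsTrans _ r)).trans _ _ _ h1 h2⟩ _ _ _ hxy hyz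
  obtain ⟨β, hβ, hβmax⟩ := exists_rel_max htri htr hSfin.toFinset
    ⟨α, hSfin.mem_toFinset.2 hSne⟩
  have h : ∃ β ∈ supp K n (initialForm K n b f),
      ∀ γ ∈ supp K n (initialForm K n b f), γ = β ∨ r γ β := by
    refine ⟨β, hSfin.mem_toFinset.1 hβ, ?_⟩
    intro γ hγ
    exact hβmax γ (hSfin.mem_toFinset.2 hγ)
  rw [exponent, dif_pos h]
  exact h.choose_spec.1

/-- The `b`-exponent of a nonzero series lies in its support. -/
lemma exponent_mem_supp (r : (Fin n →₀ ℕ) → (Fin n →₀ ℕ) → Prop)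
    (hr : IsWellOrder (Fin n →₀ ℕ) r) (b : Fin n → ℝ) (hb : ∀ i, 0 < b i)
    (f : MvPowerSeries (Fin n) K) (hf : f ≠ 0) :
    exponent K n r b f ∈ supp K n f := by
  have h := exponent_spec K n r hr b hb f hf
  rw [supp_initialForm] at h
  exact h.1

/-- Generators lie in the closed adjoin. -/
lemma subset_closedAdjoin (S : Set (MvPowerSeries (Fin n) K)) :
    S ⊆ (closedAdjoin K n S : Set (MvPowerSeries (Fin n) K)) := by
  intro x hx N
  exact ⟨x, Algebra.subset_adjoin hx, by rw [sub_self]; exact Submodule.zero_mem _⟩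

/-- if `M(A,a) = M(A,b)` then an `a`-reduced canonical basis is also a
`b`-reduced canonical basis, with the same leading monomials. -/
theorem reducedCanonicalBasis_of_leadAlgebra_eq
    (r : (Fin n →₀ ℕ) → (Fin n →₀ ℕ) → Prop) (hr : IsWellOrder (Fin n →₀ ℕ) r)
    (hradd : ∀ α β γ : Fin n →₀ ℕ, r α β → r (α + γ) (β + γ))
    (s : ℕ) (f : Fin s → MvPowerSeries (Fin n) K) (hf : ∀ i, f i ≠ 0)
    (A : Subalgebra K (MvPowerSeries (Fin n) K)) (hA : A = closedAdjoin K n (Set.range f))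
    (hlen : FiniteColength K n A)
    (a b : Fin n → ℝ) (ha : ∀ i, 0 < a i) (hb : ∀ i, 0 < b i)
    (hM : leadAlgebra K n r a (A : Set (MvPowerSeries (Fin n) K)) =
      leadAlgebra K n r b (A : Set (MvPowerSeries (Fin n) K)))
    (m : ℕ) (g : Fin m → MvPowerSeries (Fin n) K)
    (hg : IsReducedCanonicalBasis K n r a A g) :
    (∀ i, leadMon K n r a (g i) = leadMon K n r b (g i)) ∧
      IsReducedCanonicalBasis K n r b A g := by
  obtain ⟨⟨⟨hmem, hCB⟩, hmin⟩, hmonic, hred⟩ := hg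
  -- Step 1: the exponents agree.
  have key : ∀ i, exponent K n r b (g i) = exponent K n r a (g i) := by
    intro i
    by_contra hne
    have hgi0 : g i ≠ 0 := (hmem i).2
    set β := exponent K n r b (g i) with hβdef
    have hβ : β ∈ supp K n (g i) := exponent_mem_supp K n r hr b hb (g i) hgi0
    have hc : MvPowerSeries.coeff β (g i) ≠ 0 := hβ
    -- the leading monomial w.r.t. b is in the b-lead algebra
    have h1 : leadMon K n r b (g i) ∈
        leadAlgebra K n r b (A : Set (MvPowerSeries (Fin n) K)) :=
      subset_closedAdjoin K n _ ⟨g i, (hmem i).1, hgi0, rfl⟩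
    -- hence the pure monomial x^β is also there
    have h2 : (MvPowerSeries.monomial β (1 : K)) ∈
        leadAlgebra K n r b (A : Set (MvPowerSeries (Fin n) K)) := by
      have hsmul := Subalgebra.smul_mem _ h1 (MvPowerSeries.coeff β (g i))⁻¹
      have heq : (MvPowerSeries.coeff β (g i))⁻¹ • leadMon K n r b (g i) =
          MvPowerSeries.monomial β (1 : K) := by
        rw [leadMon, ← hβdef, ← map_smul, smul_eq_mul, inv_mul_cancel₀ hc]
      rwa [heq] at hsmul
    have h3 : (MvPowerSeries.monomial β (1 : K)) ∈
        closedAdjoin K n (Set.range fun j => leadMon K n r a (g j)) := by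
      rw [← hCB, hM]
      exact h2
    -- β is in the support of g i minus its a-leading monomial
    have h4 : β ∈ supp K n (g i - leadMon K n r a (g i)) := by
      have : MvPowerSeries.coeff β (g i - leadMon K n r a (g i)) =
          MvPowerSeries.coeff β (g i) := by
        rw [map_sub, leadMon, MvPowerSeries.coeff_monomial_ne hne, sub_zero]
      exact show MvPowerSeries.coeff β _ ≠ 0 by rw [this]; exact hc
    exact hred i β h4 h3
  have keyM : ∀ i, leadMon K n r a (g i) = leadMon K n r b (g i) := by
    intro i
    rw [leadMon, leadMon, key i]
  refine ⟨keyM, ?_⟩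
  have hrange : (Set.range fun i => leadMon K n r b (g i)) =
      (Set.range fun i => leadMon K n r a (g i)) := by
    apply congrArg
    funext i
    exact (keyM i).symm
  refine ⟨⟨⟨hmem, ?_⟩, ?_⟩, ?_, ?_⟩
  · rw [← hM, hCB, hrange]
  · intro T hT
    rw [hrange] at hT
    rw [← hM]
    exact hmin T hT
  · intro i
    rw [key i]
    exact hmonic i
  · intro i α hα
    rw [← keyM i] at hα
    rw [hrange]
    exact hred i α hα

end CanonicalFan
end
end

section
/- Let f be a nonzero element of F = K[[x_1,…,x_n]]. Then the set {in(f,a) : a ∈ (ℝ_{>0})^n} of a-initial forms of f is finite. -/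
noncomputable section

namespace CanonicalFan

open MvPowerSeries

variable (K : Type*) [Field K] (n : ℕ)

/-- for a fixed nonzero `f`, the set of initial forms `in(f,a)` over all
positive `a` is finite. -/
theorem initialForm_finite
    (f : MvPowerSeries (Fin n) K) (hf : f ≠ 0) :
    {g : MvPowerSeries (Fin n) K | ∃ a : Fin n → ℝ, (∀ i, 0 < a i) ∧
      initialForm K n a f = g}.Finite := by
  classical
  set M : Set (Fin n →₀ ℕ) :=
    {α | α ∈ supp K n f ∧ ∀ β ∈ supp K n f, β ≤ α → β = α} with hMdef
  have hanti : IsAntichain (· ≤ ·) M := by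
    intro x hx y hy hxy hle
    exact hxy (hy.2 x hx.1 hle)
  have hM : M.Finite :=
    hanti.finite_of_partiallyWellOrderedOn (Set.isPWO_of_wellQuasiOrderedLE M)
  set G : Set (Fin n →₀ ℕ) → MvPowerSeries (Fin n) K :=
    fun S α => if α ∈ S then MvPowerSeries.coeff α f else 0 with hGdef
  apply Set.Finite.subset (hM.finite_subsets.image G)
  rintro g ⟨a, ha, rfl⟩
  refine ⟨{α | α ∈ supp K n f ∧ ((weight n a α : ℝ) : EReal) = nu K n a f}, ?_, ?_⟩
  · -- this set is contained in M
    rintro α ⟨hαs, hαw⟩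
    refine ⟨hαs, fun β hβ hle => ?_⟩
    by_contra hne
    have hlt : weight n a β < weight n a α := by
      obtain ⟨j, hj⟩ : ∃ j, β j ≠ α j := by
        by_contra h
        push_neg at h
        exact hne (Finsupp.ext h)
      refine Finset.sum_lt_sum (fun i _ => ?_) ⟨j, Finset.mem_univ j, ?_⟩
      · exact mul_le_mul_of_nonneg_left (Nat.cast_le.2 (hle i)) (ha i).le
      · exact mul_lt_mul_of_pos_left (Nat.cast_lt.2 (lt_of_le_of_ne (hle j) hj)) (ha j)
    have h1 : nu K n a f ≤ ((weight n a β : ℝ) : EReal) :=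
      sInf_le ⟨β, hβ, rfl⟩
    have h2 : ((weight n a β : ℝ) : EReal) < ((weight n a α : ℝ) : EReal) :=
      EReal.coe_lt_coe_iff.2 hlt
    rw [hαw] at h2
    exact absurd (lt_of_le_of_lt h1 h2) (lt_irrefl _)
  · symm
    funext α
    show (if ((weight n a α : ℝ) : EReal) = nu K n a f
        then MvPowerSeries.coeff α f else 0) = _
    by_cases h : ((weight n a α : ℝ) : EReal) = nu K n a f
    · by_cases hs : α ∈ supp K n f
      · simp [hGdef, h, hs]
      · have : MvPowerSeries.coeff α f = 0 := by
          by_contra hc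
          exact hs hc
        simp [hGdef, h, hs, this]
    · simp [hGdef, h]

end CanonicalFan
end
end

section
/- Let K be a field, A = K[[x+y, xy, xy²]] ⊆ F = K[[x,y]], and a = (1,2) ∈ (ℝ_{>0})². Then the additive submonoid {exp(f,a) : f ∈ A∖{0}} ∪ {0} of ℕ² is not finitely generated. (In particular, exp(f,a) = (1,n) is attained for every n ≥ 0, e.g. by x+y, xy, and xy^n for n ≥ 2.) -/
noncomputable section

namespace CanonicalFan

open MvPowerSeries

variable (K : Type*) [Field K] (n : ℕ)

/-! ### Auxiliary lemmas for Statement 16 -/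

section Aux

open Finsupp

/-- Elements of `mIdeal ^ N` have no coefficients in total degree `< N`. -/
lemma aux_coeff_eq_zero_of_mem_pow :
    ∀ (N : ℕ) (h : MvPowerSeries (Fin 2) K), h ∈ mIdeal K 2 ^ N →
      ∀ α : Fin 2 →₀ ℕ, α 0 + α 1 < N → MvPowerSeries.coeff α h = 0 := by
  have hbase : ∀ q ∈ mIdeal K 2, MvPowerSeries.coeff (0 : Fin 2 →₀ ℕ) q = 0 := by
    intro q hq
    have hle : mIdeal K 2 ≤ RingHom.ker (MvPowerSeries.constantCoeff (σ := Fin 2) (R := K)) := by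
      rw [mIdeal, Ideal.span_le]
      rintro _ ⟨i, rfl⟩
      simp [RingHom.mem_ker]
    simpa [MvPowerSeries.coeff_zero_eq_constantCoeff, RingHom.mem_ker] using hle hq
  intro N
  induction N with
  | zero => intro h _ α hα; omega
  | succ N ih =>
    intro h hh α hα
    rw [pow_succ] at hh
    revert α
    refine Submodule.mul_induction_on hh ?_ ?_
    · intro p hp q hq α hα
      rw [MvPowerSeries.coeff_mul]
      refine Finset.sum_eq_zero fun x hx => ?_
      have hxadd : x.1 + x.2 = α := Finset.HasAntidiagonal.mem_antidiagonal.mp hx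
      have h0 : x.1 0 + x.2 0 = α 0 := by rw [← hxadd]; simp
      have h1 : x.1 1 + x.2 1 = α 1 := by rw [← hxadd]; simp
      by_cases hcase : x.1 0 + x.1 1 < N
      · rw [ih p hp x.1 hcase, zero_mul]
      · have hx2 : x.2 = 0 := by
          ext i
          fin_cases i <;> simp <;> omega
        rw [hx2, hbase q hq, mul_zero]
    · intro p q hp hq α hα
      rw [map_add, hp α hα, hq α hα, add_zero]

/-- The subalgebra of series whose coefficients at `x^m` and `y^m` agree. -/
def symmAlg : Subalgebra K (MvPowerSeries (Fin 2) K) where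
  carrier := {f | ∀ m : ℕ, MvPowerSeries.coeff (Finsupp.single 0 m) f =
      MvPowerSeries.coeff (Finsupp.single 1 m) f}
  algebraMap_mem' c m := by
    rcases eq_or_ne m 0 with hm | hm <;>
      simp [MvPowerSeries.algebraMap_apply, MvPowerSeries.coeff_C,
        Finsupp.single_eq_zero, hm]
  add_mem' {f g} hf hg m := by simp [map_add, hf m, hg m]
  mul_mem' {f g} hf hg m := by
    rw [MvPowerSeries.coeff_mul, MvPowerSeries.coeff_mul,
      Finsupp.antidiagonal_single, Finsupp.antidiagonal_single,
      Finset.sum_map, Finset.sum_map]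
    refine Finset.sum_congr rfl fun p _ => ?_
    simp only [Function.Embedding.coe_prodMap, Function.Embedding.coeFn_mk, Prod.map_apply,
      Prod.map_fst, Prod.map_snd]
    rw [hf p.1, hg p.2]

lemma aux_coeff_X (s : Fin 2) (α : Fin 2 →₀ ℕ) :
    MvPowerSeries.coeff α (MvPowerSeries.X s : MvPowerSeries (Fin 2) K) =
      if α = Finsupp.single s 1 then 1 else 0 := by
  rw [MvPowerSeries.X_def, MvPowerSeries.coeff_monomial]

lemma aux_X0_mul_X1_pow (m : ℕ) :
    (MvPowerSeries.X 0 * MvPowerSeries.X 1 ^ m : MvPowerSeries (Fin 2) K) =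
      MvPowerSeries.monomial (Finsupp.single 0 1 + Finsupp.single 1 m) 1 := by
  rw [MvPowerSeries.X_pow_eq, MvPowerSeries.X_def, MvPowerSeries.monomial_mul_monomial, one_mul]

lemma aux_gens_mem_symmAlg :
    ({MvPowerSeries.X 0 + MvPowerSeries.X 1,
      MvPowerSeries.X 0 * MvPowerSeries.X 1,
      MvPowerSeries.X 0 * MvPowerSeries.X 1 ^ 2} : Set (MvPowerSeries (Fin 2) K)) ⊆
      (symmAlg K : Set (MvPowerSeries (Fin 2) K)) := by
  have hne2 : ∀ (i j : Fin 2) (m k l : ℕ), i ≠ j → l ≠ 0 →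
      (Finsupp.single i m : Fin 2 →₀ ℕ) ≠ Finsupp.single i k + Finsupp.single j l := by
    intro i j m k l hij hl h
    have := DFunLike.congr_fun h j
    simp [Finsupp.single_apply, Finsupp.add_apply, hij, hij.symm] at this
    omega
  have hne3 : ∀ (i j : Fin 2) (m k l : ℕ), i ≠ j → k ≠ 0 →
      (Finsupp.single j m : Fin 2 →₀ ℕ) ≠ Finsupp.single i k + Finsupp.single j l := by
    intro i j m k l hij hk h
    have := DFunLike.congr_fun h i
    simp [Finsupp.single_apply, Finsupp.add_apply, hij, hij.symm] at this
    omega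
  rintro x (rfl | rfl | rfl)
  · intro m
    have e01 : (Finsupp.single (0 : Fin 2) m : Fin 2 →₀ ℕ) ≠ Finsupp.single 1 1 := by
      intro h
      have := DFunLike.congr_fun h 1
      simp [Finsupp.single_apply] at this
    have e10 : (Finsupp.single (1 : Fin 2) m : Fin 2 →₀ ℕ) ≠ Finsupp.single 0 1 := by
      intro h
      have := DFunLike.congr_fun h 0
      simp [Finsupp.single_apply] at this
    rw [map_add, map_add, aux_coeff_X, aux_coeff_X, aux_coeff_X, aux_coeff_X,
      if_neg e01, if_neg e10]
    rcases eq_or_ne m 1 with rfl | hm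
    · rw [if_pos rfl, if_pos rfl]; simp
    · rw [if_neg fun h => hm (Finsupp.single_injective _ h),
        if_neg fun h => hm (Finsupp.single_injective _ h)]
  · intro m
    have h := aux_X0_mul_X1_pow K 1
    rw [pow_one] at h
    rw [h, MvPowerSeries.coeff_monomial, MvPowerSeries.coeff_monomial,
      if_neg (hne2 0 1 m 1 1 (by decide) one_ne_zero),
      if_neg (hne3 0 1 m 1 1 (by decide) one_ne_zero)]
  · intro m
    rw [aux_X0_mul_X1_pow, MvPowerSeries.coeff_monomial, MvPowerSeries.coeff_monomial,
      if_neg (hne2 0 1 m 1 2 (by decide) two_ne_zero),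
      if_neg (hne3 0 1 m 1 2 (by decide) one_ne_zero)]

/-- Key symmetry: every element of `K[[x+y, xy, xy²]]` has equal coefficients at
`x^m` and `y^m`. -/
lemma aux_coeff_symm {f : MvPowerSeries (Fin 2) K}
    (hf : f ∈ closedAdjoin K 2 ({MvPowerSeries.X 0 + MvPowerSeries.X 1,
      MvPowerSeries.X 0 * MvPowerSeries.X 1,
      MvPowerSeries.X 0 * MvPowerSeries.X 1 ^ 2} : Set (MvPowerSeries (Fin 2) K)))
    (m : ℕ) :
    MvPowerSeries.coeff (Finsupp.single 0 m) f =
      MvPowerSeries.coeff (Finsupp.single 1 m) f := by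
  obtain ⟨g, hg, hfg⟩ := hf (m + 1)
  have hg' : g ∈ symmAlg K := Algebra.adjoin_le (aux_gens_mem_symmAlg K) hg
  have h0 : MvPowerSeries.coeff (Finsupp.single 0 m) (f - g) = 0 :=
    aux_coeff_eq_zero_of_mem_pow K (m + 1) _ hfg _ (by simp [Finsupp.single_apply])
  have h1 : MvPowerSeries.coeff (Finsupp.single 1 m) (f - g) = 0 :=
    aux_coeff_eq_zero_of_mem_pow K (m + 1) _ hfg _ (by simp [Finsupp.single_apply])
  rw [map_sub, sub_eq_zero] at h0 h1
  rw [h0, h1, hg' m]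

lemma aux_adjoin_le_closed {S : Set (MvPowerSeries (Fin 2) K)} {f : MvPowerSeries (Fin 2) K}
    (hf : f ∈ Algebra.adjoin K S) : f ∈ closedAdjoin K 2 S :=
  fun N => ⟨f, hf, by rw [sub_self]; exact zero_mem _⟩

lemma aux_mono_mem (m : ℕ) (hm : 1 ≤ m) :
    (MvPowerSeries.X 0 * MvPowerSeries.X 1 ^ m : MvPowerSeries (Fin 2) K) ∈
      Algebra.adjoin K ({MvPowerSeries.X 0 + MvPowerSeries.X 1,
        MvPowerSeries.X 0 * MvPowerSeries.X 1,
        MvPowerSeries.X 0 * MvPowerSeries.X 1 ^ 2} : Set (MvPowerSeries (Fin 2) K)) := by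
  set G : Set (MvPowerSeries (Fin 2) K) := {MvPowerSeries.X 0 + MvPowerSeries.X 1,
    MvPowerSeries.X 0 * MvPowerSeries.X 1, MvPowerSeries.X 0 * MvPowerSeries.X 1 ^ 2} with hG
  have hu : (MvPowerSeries.X 0 + MvPowerSeries.X 1 : MvPowerSeries (Fin 2) K) ∈
      Algebra.adjoin K G := Algebra.subset_adjoin (by simp [hG])
  have hv : (MvPowerSeries.X 0 * MvPowerSeries.X 1 : MvPowerSeries (Fin 2) K) ∈
      Algebra.adjoin K G := Algebra.subset_adjoin (by simp [hG])
  have hw : (MvPowerSeries.X 0 * MvPowerSeries.X 1 ^ 2 : MvPowerSeries (Fin 2) K) ∈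
      Algebra.adjoin K G := Algebra.subset_adjoin (by simp [hG])
  have key : ∀ k : ℕ,
      (MvPowerSeries.X 0 * MvPowerSeries.X 1 ^ (k + 1) : MvPowerSeries (Fin 2) K) ∈
        Algebra.adjoin K G ∧
      (MvPowerSeries.X 0 * MvPowerSeries.X 1 ^ (k + 2) : MvPowerSeries (Fin 2) K) ∈
        Algebra.adjoin K G := by
    intro k
    induction k with
    | zero => exact ⟨by rw [pow_one]; exact hv, hw⟩
    | succ k ih =>
      refine ⟨ih.2, ?_⟩
      have hident : (MvPowerSeries.X 0 * MvPowerSeries.X 1 ^ (k + 3) :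
          MvPowerSeries (Fin 2) K) =
          (MvPowerSeries.X 0 * MvPowerSeries.X 1 ^ (k + 2)) *
            (MvPowerSeries.X 0 + MvPowerSeries.X 1) -
          (MvPowerSeries.X 0 * MvPowerSeries.X 1) *
            (MvPowerSeries.X 0 * MvPowerSeries.X 1 ^ (k + 1)) := by
        ring
      rw [hident]
      exact sub_mem (mul_mem ih.2 hu) (mul_mem hv ih.1)
  obtain ⟨k, rfl⟩ : ∃ k, m = k + 1 := ⟨m - 1, by omega⟩
  exact (key k).1

lemma aux_mem_supp_initialForm {a : Fin 2 → ℝ} {f : MvPowerSeries (Fin 2) K}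
    {α : Fin 2 →₀ ℕ} (h : α ∈ supp K 2 (initialForm K 2 a f)) :
    MvPowerSeries.coeff α f ≠ 0 ∧
      ((weight 2 a α : ℝ) : EReal) = nu K 2 a f := by
  simp only [supp, Set.mem_setOf_eq, MvPowerSeries.coeff_apply, initialForm] at h
  by_cases hc : ((weight 2 a α : ℝ) : EReal) = nu K 2 a f
  · rw [if_pos hc] at h; exact ⟨h, hc⟩
  · rw [if_neg hc] at h; exact absurd rfl h

lemma aux_supp_monomial (β : Fin 2 →₀ ℕ) {c : K} (hc : c ≠ 0) :
    supp K 2 (MvPowerSeries.monomial β c) = {β} := by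
  ext α
  simp [supp, MvPowerSeries.coeff_monomial, hc]

lemma aux_nu_monomial (a : Fin 2 → ℝ) (β : Fin 2 →₀ ℕ) {c : K} (hc : c ≠ 0) :
    nu K 2 a (MvPowerSeries.monomial β c) = ((weight 2 a β : ℝ) : EReal) := by
  rw [nu, aux_supp_monomial K β hc, Set.image_singleton, sInf_singleton]

lemma aux_supp_initialForm_monomial (a : Fin 2 → ℝ) (β : Fin 2 →₀ ℕ) {c : K} (hc : c ≠ 0) :
    supp K 2 (initialForm K 2 a (MvPowerSeries.monomial β c)) = {β} := by
  refine Set.Subset.antisymm ?_ ?_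
  · intro α hα
    have := (aux_mem_supp_initialForm K hα).1
    rw [← aux_supp_monomial K β hc]
    exact this
  · rintro α rfl
    show MvPowerSeries.coeff α (initialForm K 2 a (MvPowerSeries.monomial α c)) ≠ 0
    rw [MvPowerSeries.coeff_apply]
    show (if ((weight 2 a α : ℝ) : EReal) = nu K 2 a (MvPowerSeries.monomial α c)
      then MvPowerSeries.coeff α (MvPowerSeries.monomial α c) else 0) ≠ 0
    rw [if_pos (aux_nu_monomial K a α hc).symm, MvPowerSeries.coeff_monomial_same]
    exact hc

lemma aux_exponent_monomial (r : (Fin 2 →₀ ℕ) → (Fin 2 →₀ ℕ) → Prop) (a : Fin 2 → ℝ)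
    (β : Fin 2 →₀ ℕ) {c : K} (hc : c ≠ 0) :
    exponent K 2 r a (MvPowerSeries.monomial β c) = β := by
  have hsupp := aux_supp_initialForm_monomial K a β hc
  have hex : ∃ β' ∈ supp K 2 (initialForm K 2 a (MvPowerSeries.monomial β c)),
      ∀ γ ∈ supp K 2 (initialForm K 2 a (MvPowerSeries.monomial β c)), γ = β' ∨ r γ β' := by
    refine ⟨β, by rw [hsupp]; rfl, fun γ hγ => Or.inl ?_⟩
    rw [hsupp] at hγ
    exact hγ
  rw [exponent, dif_pos hex]
  exact (Set.ext_iff.mp hsupp hex.choose).mp hex.choose_spec.1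

lemma aux_exponent_cases (r : (Fin 2 →₀ ℕ) → (Fin 2 →₀ ℕ) → Prop) (a : Fin 2 → ℝ)
    (f : MvPowerSeries (Fin 2) K) :
    exponent K 2 r a f = 0 ∨
      exponent K 2 r a f ∈ supp K 2 (initialForm K 2 a f) := by
  rw [exponent]
  split
  · next h => exact Or.inr h.choose_spec.1
  · exact Or.inl rfl

lemma aux_weight_single0 (m : ℕ) :
    weight 2 ![(1 : ℝ), 2] (Finsupp.single 0 m) = (m : ℝ) := by
  simp [weight, Fin.sum_univ_two, Finsupp.single_apply]

lemma aux_weight_single1 (m : ℕ) :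
    weight 2 ![(1 : ℝ), 2] (Finsupp.single 1 m) = 2 * (m : ℝ) := by
  simp [weight, Fin.sum_univ_two, Finsupp.single_apply]

end Aux

/-- for `A = K[[x+y, xy, xy²]]` and `a = (1,2)`, the additive monoid
`exp(A,a) ∪ {0}` is not finitely generated. -/
theorem expSet_not_fg
    (r : (Fin 2 →₀ ℕ) → (Fin 2 →₀ ℕ) → Prop) (hr : IsWellOrder (Fin 2 →₀ ℕ) r)
    (hradd : ∀ α β γ : Fin 2 →₀ ℕ, r α β → r (α + γ) (β + γ)) :
    ∀ S : AddSubmonoid (Fin 2 →₀ ℕ),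
      (S : Set (Fin 2 →₀ ℕ)) =
        expSet K 2 r ![(1 : ℝ), 2]
          ((closedAdjoin K 2 {MvPowerSeries.X 0 + MvPowerSeries.X 1,
            MvPowerSeries.X 0 * MvPowerSeries.X 1,
            MvPowerSeries.X 0 * MvPowerSeries.X 1 ^ 2} :
              Subalgebra K (MvPowerSeries (Fin 2) K)) :
            Set (MvPowerSeries (Fin 2) K)) ∪ {0} →
      ¬ S.FG := by
  intro S hS hFG
  classical
  set G : Set (MvPowerSeries (Fin 2) K) := {MvPowerSeries.X 0 + MvPowerSeries.X 1,
    MvPowerSeries.X 0 * MvPowerSeries.X 1, MvPowerSeries.X 0 * MvPowerSeries.X 1 ^ 2} with hG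
  -- the elements (1, m) for m ≥ 1 are in S
  have hmem : ∀ m : ℕ, 1 ≤ m →
      (Finsupp.single 0 1 + Finsupp.single 1 m : Fin 2 →₀ ℕ) ∈ S := by
    intro m hm
    rw [← SetLike.mem_coe, hS]
    left
    refine ⟨MvPowerSeries.monomial (Finsupp.single 0 1 + Finsupp.single 1 m) 1, ?_, ?_, ?_⟩
    · have hmm := aux_adjoin_le_closed K (aux_mono_mem K m hm)
      rw [aux_X0_mul_X1_pow K m] at hmm
      exact hmm
    · intro h
      have h2 := congrArg (MvPowerSeries.coeff (Finsupp.single 0 1 + Finsupp.single 1 m)) h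
      rw [MvPowerSeries.coeff_monomial_same, map_zero] at h2
      exact one_ne_zero h2
    · exact aux_exponent_monomial K r ![(1 : ℝ), 2] _ one_ne_zero
  -- nonzero elements of S have positive first coordinate
  have hpos : ∀ x : Fin 2 →₀ ℕ, x ∈ S → x ≠ 0 → 1 ≤ x 0 := by
    intro x hx hx0
    by_contra hcon
    have hx00 : x 0 = 0 := by omega
    have hx' : x ∈ (S : Set (Fin 2 →₀ ℕ)) := hx
    rw [hS] at hx'
    rcases hx' with hx' | hx'
    · obtain ⟨f, hfA, hf0, hexp⟩ := hx'
      rcases aux_exponent_cases K r ![(1 : ℝ), 2] f with hz | hsupp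
      · rw [hexp] at hz; exact hx0 hz
      rw [hexp] at hsupp
      obtain ⟨hcoeff, hweight⟩ := aux_mem_supp_initialForm K hsupp
      set m : ℕ := x 1 with hm
      have hxeq : x = Finsupp.single 1 m := by
        ext i
        fin_cases i
        · simpa [Finsupp.single_apply] using hx00
        · simp [Finsupp.single_apply, hm]
      have hm0 : m ≠ 0 := by
        intro h
        apply hx0
        rw [hxeq, h, Finsupp.single_zero]
      -- coefficient at x^m is also nonzero
      have hcsym : MvPowerSeries.coeff (Finsupp.single 0 m) f ≠ 0 := by
        rw [aux_coeff_symm K (by exact hfA) m, ← hxeq]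
        exact hcoeff
      -- so nu f ≤ m
      have hnule : nu K 2 ![(1 : ℝ), 2] f ≤ ((m : ℝ) : EReal) := by
        have hmemsupp : Finsupp.single (0 : Fin 2) m ∈ supp K 2 f := hcsym
        have : ((weight 2 ![(1 : ℝ), 2] (Finsupp.single (0 : Fin 2) m) : ℝ) : EReal) ∈
            ((fun α => ((weight 2 ![(1 : ℝ), 2] α : ℝ) : EReal)) '' supp K 2 f) :=
          Set.mem_image_of_mem _ hmemsupp
        have hle := sInf_le this
        rw [aux_weight_single0 m] at hle
        exact hle
      -- but nu f = 2 m
      have hnueq : nu K 2 ![(1 : ℝ), 2] f = (((2 * m : ℝ)) : EReal) := by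
        rw [← hweight, hxeq, aux_weight_single1 m]
      rw [hnueq] at hnule
      have h2m : (2 * m : ℝ) ≤ (m : ℝ) := by exact_mod_cast hnule
      have hm1 : (1 : ℝ) ≤ (m : ℝ) := by exact_mod_cast Nat.one_le_iff_ne_zero.mpr hm0
      linarith
    · exact hx0 hx'
  -- finite generation gives a contradiction
  obtain ⟨T, hT⟩ := hFG
  have hzero : ∀ y : Fin 2 →₀ ℕ, y ∈ S → y 0 = 0 → y = 0 := by
    intro y hy hy0
    by_contra h
    have := hpos y hy h
    omega
  have key : ∀ x : Fin 2 →₀ ℕ, x ∈ AddSubmonoid.closure (T : Set (Fin 2 →₀ ℕ)) →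
      x 0 = 1 → x ∈ (T : Set (Fin 2 →₀ ℕ)) := by
    intro x hx
    induction hx using AddSubmonoid.closure_induction with
    | mem z hz => exact fun _ => hz
    | zero => intro h; simp at h
    | add p q hp hq ihp ihq =>
      intro hpq
      have hadd : p 0 + q 0 = 1 := by
        simpa [Finsupp.add_apply] using hpq
      have hpS : p ∈ S := by rw [← hT]; exact hp
      have hqS : q ∈ S := by rw [← hT]; exact hq
      rcases Nat.eq_zero_or_pos (p 0) with h0 | h0
      · have : p = 0 := hzero p hpS h0
        rw [this, zero_add]
        exact ihq (by omega)
      · have hq0 : q 0 = 0 := by omega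
        have : q = 0 := hzero q hqS hq0
        rw [this, add_zero]
        exact ihp (by omega)
  -- the infinitely many elements (1, m+1) all lie in the finite set T
  have hinj : Function.Injective
      (fun k : ℕ => (Finsupp.single 0 1 + Finsupp.single 1 (k + 1) : Fin 2 →₀ ℕ)) := by
    intro p q h
    have := DFunLike.congr_fun h 1
    simp [Finsupp.add_apply, Finsupp.single_apply] at this
    omega
  have hrange : Set.range
      (fun k : ℕ => (Finsupp.single 0 1 + Finsupp.single 1 (k + 1) : Fin 2 →₀ ℕ)) ⊆
      (T : Set (Fin 2 →₀ ℕ)) := by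
    rintro _ ⟨k, rfl⟩
    refine key _ ?_ ?_
    · rw [hT]; exact hmem (k + 1) (by omega)
    · simp [Finsupp.add_apply, Finsupp.single_apply]
  exact (Set.infinite_range_of_injective hinj) (T.finite_toSet.subset hrange)

end CanonicalFan
end
end
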